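/- In the coupled MLEnKF / mean-field-shadow setting, for every n ∈ ℕ and p ≥ 2: ‖C^{ML}_n − C̄^{ML}_n‖_{L^p(Ω;𝓗⊗𝓗)} ≤ 4 Σ_{ℓ=0}^L ‖v^ℓ_n − v̄^ℓ_n‖_{L^{2p}(Ω;𝓗)} (‖v^ℓ_n‖_{L^{2p}(Ω;𝓗)} + ‖v̄^ℓ_n‖_{L^{2p}(Ω;𝓗)}), where v^ℓ_n and v̄^ℓ_n denote (any one of) the identically distributed level-ℓ prediction particles of the MLEnKF ensemble and of the mean-field shadow ensemble, respectively, and C^{ML}_n, C̄^{ML}_n are the corresponding multilevel sample covariances. -/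

import Mathlib

open MeasureTheory ProbabilityTheory ContinuousLinearMap Finset
open scoped RealInnerProductSpace ENNReal

/-- The `L^p(Ω;𝓗)`-norm of a random variable, for a real exponent `p`. -/
noncomputable def lpNorm {Ω : Type*} [MeasurableSpace Ω] (μ : Measure Ω)
    {H : Type*} [NormedAddCommGroup H] (p : ℝ) (u : Ω → H) : ℝ :=
  (∫ ω, ‖u ω‖ ^ p ∂μ) ^ (1 / p)

/-- Hilbert–Schmidt norm of an operator on `𝓗`, computed in the orthonormal basis `e`. -/
noncomputable def hsNorm {H : Type*} [NormedAddCommGroup H] [InnerProductSpace ℝ H]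
    (e : HilbertBasis ℕ ℝ H) (T : H →L[ℝ] H) : ℝ :=
  Real.sqrt (∑' k, ‖T (e k)‖ ^ 2)

/-- The `L^p(Ω; 𝓗⊗𝓗)`-norm of an operator-valued random variable. -/
noncomputable def lpNormHS {Ω : Type*} [MeasurableSpace Ω] (μ : Measure Ω)
    {H : Type*} [NormedAddCommGroup H] [InnerProductSpace ℝ H]
    (e : HilbertBasis ℕ ℝ H) (p : ℝ) (T : Ω → H →L[ℝ] H) : ℝ :=
  (∫ ω, hsNorm e (T ω) ^ p ∂μ) ^ (1 / p)

/-- The rank-one operator `x ⊗ x`. -/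
noncomputable def outer {E : Type*} [NormedAddCommGroup E] [InnerProductSpace ℝ E]
    (x : E) : E →L[ℝ] E :=
  (innerSL ℝ x).smulRight x

/-- The sample covariance `cov_M[u] = (M/(M−1)) (E_M[u⊗u] − E_M[u] ⊗ E_M[u])`. -/
noncomputable def sampleCov {Ω : Type*} {H : Type*} [NormedAddCommGroup H]
    [InnerProductSpace ℝ H] (M : ℕ) (u : Fin M → Ω → H) (ω : Ω) : H →L[ℝ] H :=
  ((M : ℝ) / ((M : ℝ) - 1)) •
    ((M : ℝ)⁻¹ • (∑ i, outer (u i ω)) - outer ((M : ℝ)⁻¹ • ∑ i, u i ω))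

section HSlemmas
variable {H : Type*} [NormedAddCommGroup H] [InnerProductSpace ℝ H]

/-- rank-one operator `z ↦ ⟪x,z⟫ • y`. -/
noncomputable def tpl (x y : H) : H →L[ℝ] H := (innerSL ℝ x).smulRight y

@[simp] lemma tpl_apply (x y z : H) : tpl x y z = ⟪x, z⟫ • y := rfl

@[simp] lemma outer_apply (x z : H) : outer x z = ⟪x, z⟫ • x := rfl

variable (e : HilbertBasis ℕ ℝ H)

lemma hasSum_sq_inner (x : H) : HasSum (fun k => ⟪x, e k⟫ ^ 2) (‖x‖ ^ 2) := by
  have h := e.hasSum_inner_mul_inner x x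
  rw [real_inner_self_eq_norm_sq] at h
  have : (fun k => ⟪x, e k⟫ ^ 2) = fun k => ⟪x, e k⟫ * ⟪e k, x⟫ := by
    funext k; rw [sq, real_inner_comm (e k) x]
  rw [this]; exact h

lemma hasSum_tpl_sq (x y : H) :
    HasSum (fun k => ‖tpl x y (e k)‖ ^ 2) (‖x‖ ^ 2 * ‖y‖ ^ 2) := by
  have h := (hasSum_sq_inner e x).mul_right (‖y‖ ^ 2)
  have : (fun k => ‖tpl x y (e k)‖ ^ 2) = fun k => ⟪x, e k⟫ ^ 2 * ‖y‖ ^ 2 := by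
    funext k
    rw [tpl_apply, norm_smul, mul_pow, Real.norm_eq_abs, sq_abs]
  rw [this]; exact h

lemma memℓp_tpl (x y : H) : Memℓp (fun k => tpl x y (e k)) 2 := by
  apply memℓp_gen
  have hs := (hasSum_tpl_sq e x y).summable
  have : (fun k => ‖tpl x y (e k)‖ ^ (2 : ℝ≥0∞).toReal)
      = fun k => ‖tpl x y (e k)‖ ^ 2 := by
    funext k
    rw [show ((2:ℝ≥0∞).toReal) = ((2:ℕ):ℝ) by norm_num, Real.rpow_natCast]
  rw [this]; exact hs

lemma memℓp_outer (x : H) : Memℓp (fun k => outer x (e k)) 2 := memℓp_tpl e x x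

lemma sqrt_tsum_eq_norm (f : lp (fun _ : ℕ => H) 2) :
    Real.sqrt (∑' k, ‖f k‖ ^ 2) = ‖f‖ := by
  rw [lp.norm_eq_tsum_rpow (by norm_num : (0:ℝ) < (2:ℝ≥0∞).toReal) f]
  rw [Real.sqrt_eq_rpow]
  have h2 : ((2:ℝ≥0∞)).toReal = (2:ℝ) := by norm_num
  rw [h2]
  congr 1
  refine tsum_congr fun k => ?_
  rw [show ((2:ℝ) = ((2:ℕ):ℝ)) by norm_num, Real.rpow_natCast]

lemma hsNorm_nonneg (T : H →L[ℝ] H) : 0 ≤ hsNorm e T := Real.sqrt_nonneg _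

lemma hsNorm_eq_norm_lp (T : H →L[ℝ] H) (hT : Memℓp (fun k => T (e k)) 2) :
    hsNorm e T = ‖(⟨fun k => T (e k), hT⟩ : lp (fun _ : ℕ => H) 2)‖ := by
  rw [← sqrt_tsum_eq_norm]; rfl

lemma hsNorm_add_le (S T : H →L[ℝ] H) (hS : Memℓp (fun k => S (e k)) 2)
    (hT : Memℓp (fun k => T (e k)) 2) :
    hsNorm e (S + T) ≤ hsNorm e S + hsNorm e T := by
  set x : lp (fun _ : ℕ => H) 2 := ⟨fun k => S (e k), hS⟩ with hxdef
  set y : lp (fun _ : ℕ => H) 2 := ⟨fun k => T (e k), hT⟩ with hydef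
  have hXY : hsNorm e (S + T) = ‖x + y‖ := by
    rw [← sqrt_tsum_eq_norm]
    unfold hsNorm
    congr 1
  rw [hXY, hsNorm_eq_norm_lp e S hS, hsNorm_eq_norm_lp e T hT]
  exact norm_add_le x y

lemma isHS_add {S T : H →L[ℝ] H} (hS : Memℓp (fun k => S (e k)) 2)
    (hT : Memℓp (fun k => T (e k)) 2) :
    Memℓp (fun k => (S + T) (e k)) 2 := by
  have h := hS.add hT
  have heq : ((fun k => S (e k)) + fun k => T (e k)) = fun k => (S + T) (e k) := by
    funext k; simp
  rwa [heq] at h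

lemma isHS_sub {S T : H →L[ℝ] H} (hS : Memℓp (fun k => S (e k)) 2)
    (hT : Memℓp (fun k => T (e k)) 2) :
    Memℓp (fun k => (S - T) (e k)) 2 := by
  have h := hS.sub hT
  have heq : ((fun k => S (e k)) - fun k => T (e k)) = fun k => (S - T) (e k) := by
    funext k; simp
  rwa [heq] at h

lemma isHS_smul {S : H →L[ℝ] H} (c : ℝ) (hS : Memℓp (fun k => S (e k)) 2) :
    Memℓp (fun k => (c • S) (e k)) 2 := by
  have h := hS.const_smul c
  have heq : (c • fun k => S (e k)) = fun k => (c • S) (e k) := by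
    funext k; simp
  rwa [heq] at h

lemma isHS_sum {ι : Type*} (s : Finset ι) (T : ι → H →L[ℝ] H)
    (hT : ∀ i ∈ s, Memℓp (fun k => T i (e k)) 2) :
    Memℓp (fun k => (∑ i ∈ s, T i) (e k)) 2 := by
  have := Memℓp.finset_sum s hT
  simpa [ContinuousLinearMap.sum_apply] using this

@[simp] lemma hsNorm_zero : hsNorm e (0 : H →L[ℝ] H) = 0 := by
  simp [hsNorm]

lemma hsNorm_sum_le {ι : Type*} (s : Finset ι) (T : ι → H →L[ℝ] H)
    (hT : ∀ i ∈ s, Memℓp (fun k => T i (e k)) 2) :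
    hsNorm e (∑ i ∈ s, T i) ≤ ∑ i ∈ s, hsNorm e (T i) := by
  classical
  induction s using Finset.induction_on with
  | empty => simp
  | @insert a s ha ih =>
    rw [Finset.sum_insert ha, Finset.sum_insert ha]
    refine le_trans (hsNorm_add_le e _ _ (hT a (Finset.mem_insert_self a s))
      (isHS_sum e s T fun i hi => hT i (Finset.mem_insert_of_mem hi))) ?_
    exact add_le_add (le_refl _) (ih fun i hi => hT i (Finset.mem_insert_of_mem hi))

lemma hsNorm_smul (c : ℝ) (T : H →L[ℝ] H) : hsNorm e (c • T) = |c| * hsNorm e T := by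
  unfold hsNorm
  have : (fun k => ‖(c • T) (e k)‖ ^ 2) = fun k => c ^ 2 * ‖T (e k)‖ ^ 2 := by
    funext k
    rw [ContinuousLinearMap.smul_apply, norm_smul, mul_pow, Real.norm_eq_abs, sq_abs]
  rw [this, tsum_mul_left, Real.sqrt_mul (sq_nonneg c), Real.sqrt_sq_eq_abs]

lemma hsNorm_tpl (x y : H) : hsNorm e (tpl x y) = ‖x‖ * ‖y‖ := by
  unfold hsNorm
  rw [(hasSum_tpl_sq e x y).tsum_eq, ← mul_pow, Real.sqrt_sq (by positivity)]

lemma hsNorm_outer_sub_le (a b : H) :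
    hsNorm e (outer a - outer b) ≤ ‖a - b‖ * (‖a‖ + ‖b‖) := by
  have hdecomp : outer a - outer b = tpl (a - b) a + tpl b (a - b) := by
    ext z
    simp only [ContinuousLinearMap.sub_apply, ContinuousLinearMap.add_apply,
      outer_apply, tpl_apply, inner_sub_left, sub_smul, smul_sub]
    abel
  rw [hdecomp]
  refine le_trans (hsNorm_add_le e _ _ (memℓp_tpl e _ _) (memℓp_tpl e _ _)) ?_
  rw [hsNorm_tpl, hsNorm_tpl]
  exact le_of_eq (by ring)

lemma outer_sub_expand (a b : H) :
    outer (a - b) = outer a + outer b - (tpl a b + tpl b a) := by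
  ext z
  simp only [ContinuousLinearMap.sub_apply, ContinuousLinearMap.add_apply,
    outer_apply, tpl_apply, inner_sub_left, sub_smul, smul_sub]
  abel

lemma outer_smul_eq (c : ℝ) (x : H) : outer (c • x) = (c ^ 2) • outer x := by
  ext z
  simp only [outer_apply, ContinuousLinearMap.smul_apply, real_inner_smul_left,
    smul_smul]
  congr 1
  ring

lemma tpl_sum_left {M : ℕ} (v : Fin M → H) (y : H) :
    ∑ i, tpl (v i) y = tpl (∑ i, v i) y := by
  ext z
  simp only [ContinuousLinearMap.sum_apply, tpl_apply, sum_inner, Finset.sum_smul]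

lemma tpl_sum_right {M : ℕ} (x : H) (v : Fin M → H) :
    ∑ j, tpl x (v j) = tpl x (∑ j, v j) := by
  ext z
  simp only [ContinuousLinearMap.sum_apply, tpl_apply, Finset.smul_sum]

lemma sum_sum_outer {M : ℕ} (v : Fin M → H) :
    ∑ i, ∑ j, outer (v i - v j)
      = (2 * (M:ℝ)) • ∑ i, outer (v i) - (2:ℝ) • outer (∑ i, v i) := by
  have key : ∀ i : Fin M, ∑ j, outer (v i - v j)
      = (M:ℝ) • outer (v i) + ∑ j, outer (v j)
        - (tpl (v i) (∑ j, v j) + tpl (∑ j, v j) (v i)) := by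
    intro i
    simp only [outer_sub_expand]
    rw [Finset.sum_sub_distrib, Finset.sum_add_distrib, Finset.sum_add_distrib,
      Finset.sum_const, tpl_sum_right, tpl_sum_left]
    congr 1
    congr 1
    rw [Finset.card_univ, Fintype.card_fin, Nat.cast_smul_eq_nsmul ℝ]
  rw [Finset.sum_congr rfl fun i _ => key i]
  rw [Finset.sum_sub_distrib, Finset.sum_add_distrib, Finset.sum_add_distrib,
    Finset.sum_const, ← Finset.smul_sum, tpl_sum_left, tpl_sum_right]
  rw [Finset.card_univ, Fintype.card_fin, Nat.cast_smul_eq_nsmul ℝ]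
  rw [show (tpl (∑ j, v j) (∑ j, v j)) = outer (∑ j, v j) from rfl]
  match_scalars <;> ring

lemma sampleCov_eq {Ω : Type*} (M : ℕ) (hM : 2 ≤ M) (u : Fin M → Ω → H) (ω : Ω) :
    sampleCov M u ω
      = (2 * (M:ℝ) * ((M:ℝ) - 1))⁻¹ • ∑ i, ∑ j, outer (u i ω - u j ω) := by
  have h2 : (2:ℝ) ≤ (M:ℝ) := by exact_mod_cast hM
  have hM0 : (M:ℝ) ≠ 0 := by linarith
  have hM1 : (M:ℝ) - 1 ≠ 0 := by linarith
  simp only [sampleCov]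
  rw [sum_sum_outer, outer_smul_eq]
  match_scalars <;> (field_simp; try ring)

end HSlemmas

section LpAux
variable {Ω : Type*} [MeasurableSpace Ω] {μ : Measure Ω}
variable {H : Type*} [NormedAddCommGroup H] [InnerProductSpace ℝ H]

lemma lpNorm_nonneg (p : ℝ) (u : Ω → H) : 0 ≤ lpNorm μ p u :=
  Real.rpow_nonneg
    (integral_nonneg fun ω => Real.rpow_nonneg (norm_nonneg _) _) _

lemma memℒp_term (q r : ℝ≥0∞) (hqr : 1 / q = 1 / r + 1 / r)
    (X Y X' Y' : Ω → H) (hX : MemLp X r μ) (hY : MemLp Y r μ)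
    (hX' : MemLp X' r μ) (hY' : MemLp Y' r μ) :
    MemLp (fun ω => ‖(X ω - Y ω) - (X' ω - Y' ω)‖
      * (‖X ω - X' ω‖ + ‖Y ω - Y' ω‖)) q μ := by
  have hA : MemLp (fun ω => ‖(X ω - Y ω) - (X' ω - Y' ω)‖) r μ :=
    ((hX.sub hY).sub (hX'.sub hY')).norm
  have hB : MemLp (fun ω => ‖X ω - X' ω‖ + ‖Y ω - Y' ω‖) r μ :=
    ((hX.sub hX').norm).add ((hY.sub hY').norm)
  haveI : ENNReal.HolderTriple r r q := ⟨by simpa [one_div] using hqr.symm⟩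
  exact hB.smul hA

lemma elp_term_le (q r : ℝ≥0∞) (hr1 : 1 ≤ r) (hqr : 1 / q = 1 / r + 1 / r)
    (X Y X' Y' : Ω → H)
    (hX : AEStronglyMeasurable X μ) (hY : AEStronglyMeasurable Y μ)
    (hX' : AEStronglyMeasurable X' μ) (hY' : AEStronglyMeasurable Y' μ) :
    eLpNorm (fun ω => ‖(X ω - Y ω) - (X' ω - Y' ω)‖
        * (‖X ω - X' ω‖ + ‖Y ω - Y' ω‖)) q μ
      ≤ (eLpNorm (fun ω => X ω - Y ω) r μ + eLpNorm (fun ω => X' ω - Y' ω) r μ)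
        * ((eLpNorm X r μ + eLpNorm X' r μ) + (eLpNorm Y r μ + eLpNorm Y' r μ)) := by
  set A : Ω → ℝ := fun ω => ‖(X ω - Y ω) - (X' ω - Y' ω)‖ with hA
  set B : Ω → ℝ := fun ω => ‖X ω - X' ω‖ + ‖Y ω - Y' ω‖ with hB
  have hAm : AEStronglyMeasurable A μ := ((hX.sub hY).sub (hX'.sub hY')).norm
  have hBm : AEStronglyMeasurable B μ := ((hX.sub hX').norm).add ((hY.sub hY').norm)
  have hgoal : (fun ω => ‖(X ω - Y ω) - (X' ω - Y' ω)‖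
      * (‖X ω - X' ω‖ + ‖Y ω - Y' ω‖)) = A • B := by
    funext ω
    simp only [Pi.smul_apply, Pi.mul_apply, hA, hB, smul_eq_mul]
  rw [hgoal]
  have h1 : eLpNorm (A • B) q μ ≤ eLpNorm A r μ * eLpNorm B r μ :=
    haveI : ENNReal.HolderTriple r r q := ⟨by simpa [one_div] using hqr.symm⟩
    eLpNorm_smul_le_mul_eLpNorm hBm hAm
  refine h1.trans (mul_le_mul' ?_ ?_)
  · have h2 : eLpNorm A r μ
        = eLpNorm (fun ω => (X ω - Y ω) - (X' ω - Y' ω)) r μ := by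
      rw [hA]; exact eLpNorm_norm _
    rw [h2]
    exact eLpNorm_sub_le (hX.sub hY) (hX'.sub hY') hr1
  · rw [hB]
    refine le_trans (eLpNorm_add_le ((hX.sub hX').norm) ((hY.sub hY').norm) hr1) ?_
    refine add_le_add ?_ ?_
    · rw [eLpNorm_norm]
      exact eLpNorm_sub_le hX hX' hr1
    · rw [eLpNorm_norm]
      exact eLpNorm_sub_le hY hY' hr1

lemma eLpNorm_fun_sum_le {ι : Type*} (s : Finset ι) (f : ι → Ω → ℝ) (q : ℝ≥0∞)
    (hq : 1 ≤ q) (hf : ∀ i ∈ s, AEStronglyMeasurable (f i) μ) :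
    eLpNorm (fun ω => ∑ i ∈ s, f i ω) q μ ≤ ∑ i ∈ s, eLpNorm (f i) q μ := by
  have heq : (fun ω => ∑ i ∈ s, f i ω) = ∑ i ∈ s, f i := by
    funext ω; rw [Finset.sum_apply]
  rw [heq]
  exact eLpNorm_sum_le hf hq

lemma sum_ite_offdiag (m : ℕ) (b : ℝ≥0∞) :
    ∑ i : Fin m, ∑ j : Fin m, (if i = j then (0:ℝ≥0∞) else b)
      = (m * (m - 1)) • b := by
  have hrow : ∀ i : Fin m, ∑ j : Fin m, (if i = j then (0:ℝ≥0∞) else b)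
      = (m - 1) • b := by
    intro i
    rw [← Finset.add_sum_erase _ _ (Finset.mem_univ i)]
    rw [if_pos rfl, zero_add]
    rw [Finset.sum_congr rfl (fun j hj =>
      if_neg (fun h => (Finset.mem_erase.mp hj).1 h.symm))]
    rw [Finset.sum_const, Finset.card_erase_of_mem (Finset.mem_univ i),
      Finset.card_univ, Fintype.card_fin]
  rw [Finset.sum_congr rfl fun i _ => hrow i, Finset.sum_const,
    Finset.card_univ, Fintype.card_fin, smul_smul]

end LpAux

set_option maxHeartbeats 1600000 in
/-- Lemma 3.6: in the coupled MLEnKF / mean-field-shadow setting, at a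
fixed observation time `n`, the multilevel sample covariances of the MLEnKF prediction
ensemble `{v^ℓ_n(ω_{ℓ,i}), v^{ℓ−1}_n(ω_{ℓ,i})}` (here `vF ℓ i`, `vC ℓ i`) and of its
mean-field shadow `{v̄^ℓ_n(ω_{ℓ,i}), v̄^{ℓ−1}_n(ω_{ℓ,i})}` (here `wF ℓ i`, `wC ℓ i`)
satisfy
`‖C^{ML}_n − C̄^{ML}_n‖_{L^p(Ω;𝓗⊗𝓗)} ≤ 4 Σ_ℓ ‖v^ℓ_n − v̄^ℓ_n‖_{L^{2p}} (‖v^ℓ_n‖_{L^{2p}} + ‖v̄^ℓ_n‖_{L^{2p}})`,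
where particles are identically distributed within each level (and the coarse level-`ℓ`
components are distributed as the fine level-`(ℓ−1)` ones, with `v^{−1} := 0`). -/
theorem stmt10
    {Ω : Type*} [MeasurableSpace Ω] (μ : Measure Ω) [IsProbabilityMeasure μ]
    {H : Type*} [NormedAddCommGroup H] [InnerProductSpace ℝ H] [CompleteSpace H]
    [MeasurableSpace H] [BorelSpace H] [SecondCountableTopology H]
    (e : HilbertBasis ℕ ℝ H)
    (p : ℝ) (hp : 2 ≤ p)
    (L : ℕ) (M : ℕ → ℕ) (hM : ∀ ℓ, 2 ≤ M ℓ)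
    -- the MLEnKF prediction particles (fine/coarse) and their mean-field shadows
    (vF vC wF wC : ℕ → ℕ → Ω → H)
    (hvC0 : ∀ i ω, vC 0 i ω = 0) (hwC0 : ∀ i ω, wC 0 i ω = 0)
    -- particles are identically distributed within each level
    (hid : ∀ ℓ i, IdentDistrib
      (fun ω => ((vF ℓ i ω, wF ℓ i ω), (vC ℓ i ω, wC ℓ i ω)))
      (fun ω => ((vF ℓ 0 ω, wF ℓ 0 ω), (vC ℓ 0 ω, wC ℓ 0 ω))) μ μ)
    -- the coarse components at level `ℓ ≥ 1` are distributed as the fine ones at `ℓ−1`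
    (hcoarse : ∀ ℓ, 1 ≤ ℓ → ∀ i, IdentDistrib
      (fun ω => (vC ℓ i ω, wC ℓ i ω))
      (fun ω => (vF (ℓ - 1) 0 ω, wF (ℓ - 1) 0 ω)) μ μ)
    -- finite `2p`-moments
    (hmomv : ∀ ℓ, MemLp (vF ℓ 0) (ENNReal.ofReal (2 * p)) μ)
    (hmomw : ∀ ℓ, MemLp (wF ℓ 0) (ENNReal.ofReal (2 * p)) μ)
    -- the two multilevel sample covariances
    (CML CbarML : Ω → H →L[ℝ] H)
    (hCML : ∀ ω, CML ω = ∑ ℓ ∈ Finset.range (L + 1),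
      (sampleCov (M ℓ) (fun i : Fin (M ℓ) => vF ℓ i) ω
        - sampleCov (M ℓ) (fun i : Fin (M ℓ) => vC ℓ i) ω))
    (hCbarML : ∀ ω, CbarML ω = ∑ ℓ ∈ Finset.range (L + 1),
      (sampleCov (M ℓ) (fun i : Fin (M ℓ) => wF ℓ i) ω
        - sampleCov (M ℓ) (fun i : Fin (M ℓ) => wC ℓ i) ω)) :
    lpNormHS μ e p (fun ω => CML ω - CbarML ω)
      ≤ 4 * ∑ ℓ ∈ Finset.range (L + 1),
          lpNorm μ (2 * p) (fun ω => vF ℓ 0 ω - wF ℓ 0 ω) *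
            (lpNorm μ (2 * p) (vF ℓ 0) + lpNorm μ (2 * p) (wF ℓ 0)) := by
  classical
  have hp0 : (0:ℝ) < p := by linarith
  have h2p0 : (0:ℝ) < 2 * p := by linarith
  set r : ℝ≥0∞ := ENNReal.ofReal (2 * p) with hrdef
  set q : ℝ≥0∞ := ENNReal.ofReal p with hqdef
  have hq0 : q ≠ 0 := by
    rw [hqdef]; simp only [ne_eq, ENNReal.ofReal_eq_zero, not_le]; exact hp0
  have hqt : q ≠ ∞ := by rw [hqdef]; exact ENNReal.ofReal_ne_top
  have hr0 : r ≠ 0 := by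
    rw [hrdef]; simp only [ne_eq, ENNReal.ofReal_eq_zero, not_le]; exact h2p0
  have hrt : r ≠ ∞ := by rw [hrdef]; exact ENNReal.ofReal_ne_top
  have hq1 : 1 ≤ q := by
    rw [hqdef, ← ENNReal.ofReal_one]
    exact ENNReal.ofReal_le_ofReal (by linarith)
  have hr1 : 1 ≤ r := by
    rw [hrdef, ← ENNReal.ofReal_one]
    exact ENNReal.ofReal_le_ofReal (by linarith)
  have hqr : 1 / q = 1 / r + 1 / r := by
    rw [hqdef, hrdef]
    simp only [one_div]
    rw [← ENNReal.ofReal_inv_of_pos hp0, ← ENNReal.ofReal_inv_of_pos h2p0,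
      ← ENNReal.ofReal_add (by positivity) (by positivity)]
    congr 1
    field_simp
    ring
  have hqtoR : q.toReal = p := by rw [hqdef]; exact ENNReal.toReal_ofReal hp0.le
  have hrtoR : r.toReal = 2 * p := by rw [hrdef]; exact ENNReal.toReal_ofReal h2p0.le
  -- measurability
  have hsmvF : ∀ ℓ i, AEStronglyMeasurable (vF ℓ i) μ := fun ℓ i =>
    ((measurable_fst.fst).comp_aemeasurable (hid ℓ i).aemeasurable_fst).aestronglyMeasurable
  have hsmwF : ∀ ℓ i, AEStronglyMeasurable (wF ℓ i) μ := fun ℓ i =>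
    ((measurable_fst.snd).comp_aemeasurable (hid ℓ i).aemeasurable_fst).aestronglyMeasurable
  have hsmvC : ∀ ℓ i, AEStronglyMeasurable (vC ℓ i) μ := fun ℓ i =>
    ((measurable_snd.fst).comp_aemeasurable (hid ℓ i).aemeasurable_fst).aestronglyMeasurable
  have hsmwC : ∀ ℓ i, AEStronglyMeasurable (wC ℓ i) μ := fun ℓ i =>
    ((measurable_snd.snd).comp_aemeasurable (hid ℓ i).aemeasurable_fst).aestronglyMeasurable
  -- moments
  have memvF : ∀ ℓ i, MemLp (vF ℓ i) r μ := fun ℓ i =>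
    ((hid ℓ i).comp (measurable_fst.fst)).symm.memLp_snd (hmomv ℓ)
  have memwF : ∀ ℓ i, MemLp (wF ℓ i) r μ := fun ℓ i =>
    ((hid ℓ i).comp (measurable_fst.snd)).symm.memLp_snd (hmomw ℓ)
  have memvC : ∀ ℓ i, MemLp (vC ℓ i) r μ := by
    intro ℓ i
    rcases Nat.eq_zero_or_pos ℓ with rfl | hl
    · have h0 : vC 0 i = fun _ => (0:H) := funext fun ω => hvC0 i ω
      rw [h0]; exact memLp_const 0
    · exact ((hcoarse ℓ hl i).comp measurable_fst).symm.memLp_snd (hmomv (ℓ-1))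
  have memwC : ∀ ℓ i, MemLp (wC ℓ i) r μ := by
    intro ℓ i
    rcases Nat.eq_zero_or_pos ℓ with rfl | hl
    · have h0 : wC 0 i = fun _ => (0:H) := funext fun ω => hwC0 i ω
      rw [h0]; exact memLp_const 0
    · exact ((hcoarse ℓ hl i).comp measurable_snd).symm.memLp_snd (hmomw (ℓ-1))
  -- identically distributed transfers
  have EvF : ∀ ℓ (i : ℕ), eLpNorm (vF ℓ i) r μ = eLpNorm (vF ℓ 0) r μ := fun ℓ i =>
    ((hid ℓ i).comp (measurable_fst.fst)).eLpNorm_eq r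
  have EwF : ∀ ℓ (i : ℕ), eLpNorm (wF ℓ i) r μ = eLpNorm (wF ℓ 0) r μ := fun ℓ i =>
    ((hid ℓ i).comp (measurable_fst.snd)).eLpNorm_eq r
  have EvwF : ∀ ℓ (i : ℕ), eLpNorm (fun ω => vF ℓ i ω - wF ℓ i ω) r μ
      = eLpNorm (fun ω => vF ℓ 0 ω - wF ℓ 0 ω) r μ := fun ℓ i =>
    ((hid ℓ i).comp ((measurable_fst.fst).sub (measurable_fst.snd))).eLpNorm_eq r
  have EvC : ∀ ℓ (i : ℕ), eLpNorm (vC ℓ i) r μ = eLpNorm (vC ℓ 0) r μ := fun ℓ i =>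
    ((hid ℓ i).comp (measurable_snd.fst)).eLpNorm_eq r
  have EwC : ∀ ℓ (i : ℕ), eLpNorm (wC ℓ i) r μ = eLpNorm (wC ℓ 0) r μ := fun ℓ i =>
    ((hid ℓ i).comp (measurable_snd.snd)).eLpNorm_eq r
  have EvwC : ∀ ℓ (i : ℕ), eLpNorm (fun ω => vC ℓ i ω - wC ℓ i ω) r μ
      = eLpNorm (fun ω => vC ℓ 0 ω - wC ℓ 0 ω) r μ := fun ℓ i =>
    ((hid ℓ i).comp ((measurable_snd.fst).sub (measurable_snd.snd))).eLpNorm_eq r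
  -- level quantities
  set Dv : ℕ → ℝ≥0∞ := fun ℓ => eLpNorm (fun ω => vF ℓ 0 ω - wF ℓ 0 ω) r μ with hDvdef
  set Ev : ℕ → ℝ≥0∞ := fun ℓ => eLpNorm (vF ℓ 0) r μ with hEvdef
  set Ew : ℕ → ℝ≥0∞ := fun ℓ => eLpNorm (wF ℓ 0) r μ with hEwdef
  set Dc : ℕ → ℝ≥0∞ := fun ℓ => eLpNorm (fun ω => vC ℓ 0 ω - wC ℓ 0 ω) r μ with hDcdef
  set Ec1 : ℕ → ℝ≥0∞ := fun ℓ => eLpNorm (vC ℓ 0) r μ with hEc1def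
  set Ec2 : ℕ → ℝ≥0∞ := fun ℓ => eLpNorm (wC ℓ 0) r μ with hEc2def
  -- the dominating scalar random variable
  set cR : ℕ → ℝ := fun ℓ => (2 * (M ℓ:ℝ) * ((M ℓ:ℝ) - 1))⁻¹ with hcRdef
  have hcR : ∀ ℓ, 0 ≤ cR ℓ := by
    intro ℓ
    have h2 : (2:ℝ) ≤ (M ℓ:ℝ) := by exact_mod_cast hM ℓ
    rw [hcRdef]
    have hpos : (0:ℝ) ≤ 2 * (M ℓ:ℝ) * ((M ℓ:ℝ) - 1) := by nlinarith
    exact inv_nonneg.mpr hpos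
  set GF : ℕ → ℕ → ℕ → Ω → ℝ := fun ℓ i j ω =>
    ‖(vF ℓ i ω - wF ℓ i ω) - (vF ℓ j ω - wF ℓ j ω)‖
      * (‖vF ℓ i ω - vF ℓ j ω‖ + ‖wF ℓ i ω - wF ℓ j ω‖) with hGFdef
  set GC : ℕ → ℕ → ℕ → Ω → ℝ := fun ℓ i j ω =>
    ‖(vC ℓ i ω - wC ℓ i ω) - (vC ℓ j ω - wC ℓ j ω)‖
      * (‖vC ℓ i ω - vC ℓ j ω‖ + ‖wC ℓ i ω - wC ℓ j ω‖) with hGCdef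
  set Glev : ℕ → Ω → ℝ := fun ℓ ω =>
    cR ℓ * ∑ i : Fin (M ℓ), ∑ j : Fin (M ℓ), (GF ℓ i j ω + GC ℓ i j ω) with hGlevdef
  set G : Ω → ℝ := fun ω => ∑ ℓ ∈ Finset.range (L+1), Glev ℓ ω with hGdef
  have memGF : ∀ ℓ (i j : ℕ), MemLp (GF ℓ i j) q μ := fun ℓ i j =>
    memℒp_term q r hqr _ _ _ _ (memvF ℓ i) (memwF ℓ i) (memvF ℓ j) (memwF ℓ j)
  have memGC : ∀ ℓ (i j : ℕ), MemLp (GC ℓ i j) q μ := fun ℓ i j =>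
    memℒp_term q r hqr _ _ _ _ (memvC ℓ i) (memwC ℓ i) (memvC ℓ j) (memwC ℓ j)
  have memGlev : ∀ ℓ, MemLp (Glev ℓ) q μ := by
    intro ℓ
    have h1 : MemLp (fun ω => ∑ i : Fin (M ℓ), ∑ j : Fin (M ℓ),
        (GF ℓ i j ω + GC ℓ i j ω)) q μ :=
      memLp_finsetSum (f := fun (i : Fin (M ℓ)) ω => ∑ j : Fin (M ℓ),
          (GF ℓ i j ω + GC ℓ i j ω)) Finset.univ fun i _ =>
        memLp_finsetSum (f := fun (j : Fin (M ℓ)) ω => GF ℓ i j ω + GC ℓ i j ω)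
          Finset.univ fun j _ => ((memGF ℓ i j).add (memGC ℓ i j))
    exact h1.const_mul (cR ℓ)
  have memG : MemLp G q μ := memLp_finsetSum _ fun ℓ _ => memGlev ℓ
  have hGnn : ∀ ω, 0 ≤ G ω := by
    intro ω
    rw [hGdef]
    refine Finset.sum_nonneg fun ℓ _ => ?_
    rw [hGlevdef]
    refine mul_nonneg (hcR ℓ) ?_
    refine Finset.sum_nonneg fun i _ => Finset.sum_nonneg fun j _ => ?_
    rw [hGFdef, hGCdef]
    refine add_nonneg (mul_nonneg (norm_nonneg _) (by positivity))
      (mul_nonneg (norm_nonneg _) (by positivity))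
  -- pointwise domination
  have hFle : ∀ ω, hsNorm e (CML ω - CbarML ω) ≤ G ω := by
    intro ω
    have hdec : CML ω - CbarML ω
        = ∑ ℓ ∈ Finset.range (L+1), cR ℓ •
            ∑ i : Fin (M ℓ), ∑ j : Fin (M ℓ),
              ((outer (vF ℓ i ω - vF ℓ j ω) - outer (wF ℓ i ω - wF ℓ j ω))
                + (outer (wC ℓ i ω - wC ℓ j ω) - outer (vC ℓ i ω - vC ℓ j ω))) := by
      rw [hCML ω, hCbarML ω, ← Finset.sum_sub_distrib]
      refine Finset.sum_congr rfl fun ℓ _ => ?_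
      simp only [hcRdef]
      simp only [sampleCov_eq (M ℓ) (hM ℓ)]
      simp only [← smul_sub]
      congr 1
      simp only [← Finset.sum_sub_distrib]
      refine Finset.sum_congr rfl fun i _ => Finset.sum_congr rfl fun j _ => ?_
      abel
    rw [hdec]
    have hIsHSop : ∀ ℓ (i j : Fin (M ℓ)), Memℓp (fun k =>
        ((outer (vF ℓ i ω - vF ℓ j ω) - outer (wF ℓ i ω - wF ℓ j ω))
          + (outer (wC ℓ i ω - wC ℓ j ω) - outer (vC ℓ i ω - vC ℓ j ω))) (e k)) 2 :=
      fun ℓ i j => isHS_add e (isHS_sub e (memℓp_outer e _) (memℓp_outer e _))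
        (isHS_sub e (memℓp_outer e _) (memℓp_outer e _))
    refine le_trans (hsNorm_sum_le e _ _ fun ℓ _ => isHS_smul e _
      (isHS_sum e _ _ fun i _ => isHS_sum e _ _ fun j _ => hIsHSop ℓ i j)) ?_
    rw [hGdef]
    refine Finset.sum_le_sum fun ℓ _ => ?_
    rw [hsNorm_smul, abs_of_nonneg (hcR ℓ), hGlevdef]
    refine mul_le_mul_of_nonneg_left ?_ (hcR ℓ)
    refine le_trans (hsNorm_sum_le e _ _ fun i _ =>
      isHS_sum e _ _ fun j _ => hIsHSop ℓ i j) ?_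
    refine Finset.sum_le_sum fun i _ => ?_
    refine le_trans (hsNorm_sum_le e _ _ fun j _ => hIsHSop ℓ i j) ?_
    refine Finset.sum_le_sum fun j _ => ?_
    refine le_trans (hsNorm_add_le e _ _
      (isHS_sub e (memℓp_outer e _) (memℓp_outer e _))
      (isHS_sub e (memℓp_outer e _) (memℓp_outer e _))) ?_
    rw [hGFdef, hGCdef]
    refine add_le_add ?_ ?_
    · refine le_trans (hsNorm_outer_sub_le e _ _) (le_of_eq ?_)
      rw [sub_sub_sub_comm]
    · refine le_trans (hsNorm_outer_sub_le e _ _) (le_of_eq ?_)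
      rw [norm_sub_rev, sub_sub_sub_comm, add_comm (‖wC ℓ ↑i ω - wC ℓ ↑j ω‖)]
  -- per-pair Lp bound
  have pairBound : ∀ ℓ (i j : Fin (M ℓ)),
      eLpNorm (fun ω => GF ℓ i j ω + GC ℓ i j ω) q μ
        ≤ (if i = j then 0 else
            (Dv ℓ + Dv ℓ) * ((Ev ℓ + Ev ℓ) + (Ew ℓ + Ew ℓ))
              + (Dc ℓ + Dc ℓ) * ((Ec1 ℓ + Ec1 ℓ) + (Ec2 ℓ + Ec2 ℓ))) := by
    intro ℓ i j
    by_cases hij : i = j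
    · subst hij
      rw [if_pos rfl]
      have h0 : (fun ω => GF ℓ i i ω + GC ℓ i i ω) = fun _ => (0:ℝ) := by
        funext ω
        rw [hGFdef, hGCdef]
        simp [sub_self]
      rw [h0]
      rw [show (fun _ : Ω => (0:ℝ)) = (0 : Ω → ℝ) from rfl, eLpNorm_zero]
    · rw [if_neg hij]
      have hsplit : (fun ω => GF ℓ i j ω + GC ℓ i j ω)
          = GF ℓ (i:ℕ) (j:ℕ) + GC ℓ (i:ℕ) (j:ℕ) := rfl
      rw [hsplit]
      refine le_trans (eLpNorm_add_le (memGF ℓ i j).1 (memGC ℓ i j).1 hq1) ?_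
      refine add_le_add ?_ ?_
      · refine le_trans (elp_term_le q r hr1 hqr (vF ℓ i) (wF ℓ i) (vF ℓ j) (wF ℓ j)
          (hsmvF ℓ i) (hsmwF ℓ i) (hsmvF ℓ j) (hsmwF ℓ j)) ?_
        rw [EvwF ℓ i, EvwF ℓ j, EvF ℓ i, EvF ℓ j, EwF ℓ i, EwF ℓ j]
      · refine le_trans (elp_term_le q r hr1 hqr (vC ℓ i) (wC ℓ i) (vC ℓ j) (wC ℓ j)
          (hsmvC ℓ i) (hsmwC ℓ i) (hsmvC ℓ j) (hsmwC ℓ j)) ?_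
        rw [EvwC ℓ i, EvwC ℓ j, EvC ℓ i, EvC ℓ j, EwC ℓ i, EwC ℓ j]
  -- per-level Lp bound
  have levBound : ∀ ℓ, eLpNorm (Glev ℓ) q μ
      ≤ ENNReal.ofReal (1/2) * ((Dv ℓ + Dv ℓ) * ((Ev ℓ + Ev ℓ) + (Ew ℓ + Ew ℓ))
          + (Dc ℓ + Dc ℓ) * ((Ec1 ℓ + Ec1 ℓ) + (Ec2 ℓ + Ec2 ℓ))) := by
    intro ℓ
    have hGlev_eq : Glev ℓ = (cR ℓ) • (fun ω => ∑ i : Fin (M ℓ),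
        ∑ j : Fin (M ℓ), (GF ℓ i j ω + GC ℓ i j ω)) := rfl
    rw [hGlev_eq, eLpNorm_const_smul, Real.enorm_eq_ofReal (hcR ℓ)]
    have hinner : eLpNorm (fun ω => ∑ i : Fin (M ℓ), ∑ j : Fin (M ℓ),
        (GF ℓ i j ω + GC ℓ i j ω)) q μ
        ≤ (M ℓ * (M ℓ - 1)) • ((Dv ℓ + Dv ℓ) * ((Ev ℓ + Ev ℓ) + (Ew ℓ + Ew ℓ))
            + (Dc ℓ + Dc ℓ) * ((Ec1 ℓ + Ec1 ℓ) + (Ec2 ℓ + Ec2 ℓ))) := by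
      refine le_trans (eLpNorm_fun_sum_le Finset.univ
        (fun (i : Fin (M ℓ)) => fun ω => ∑ j : Fin (M ℓ), (GF ℓ i j ω + GC ℓ i j ω)) q hq1
        (fun i _ => (memLp_finsetSum
          (f := fun (j : Fin (M ℓ)) ω => GF ℓ i j ω + GC ℓ i j ω)
          Finset.univ fun j _ => ((memGF ℓ i j).add (memGC ℓ i j))).1)) ?_
      refine le_trans (Finset.sum_le_sum fun i _ => eLpNorm_fun_sum_le Finset.univ
        (fun (j : Fin (M ℓ)) => fun ω => GF ℓ i j ω + GC ℓ i j ω) q hq1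
        (fun j _ => ((memGF ℓ i j).add (memGC ℓ i j)).1)) ?_
      refine le_trans (Finset.sum_le_sum fun i _ =>
        Finset.sum_le_sum fun j _ => pairBound ℓ i j) ?_
      rw [sum_ite_offdiag]
    refine le_trans (mul_le_mul_right hinner _) ?_
    rw [nsmul_eq_mul, ← mul_assoc]
    refine mul_le_mul_left ?_ _
    rw [← ENNReal.ofReal_natCast, ← ENNReal.ofReal_mul (hcR ℓ)]
    refine ENNReal.ofReal_le_ofReal (le_of_eq ?_)
    have h2 : (2:ℝ) ≤ (M ℓ:ℝ) := by exact_mod_cast hM ℓ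
    have h1n : (1:ℕ) ≤ M ℓ := le_trans (by norm_num) (hM ℓ)
    have hne : (M ℓ:ℝ) - 1 ≠ 0 := by linarith
    have hMne : (M ℓ:ℝ) ≠ 0 := by linarith
    rw [hcRdef]
    push_cast [Nat.cast_sub h1n]
    field_simp
  -- global Lp bound
  have hGbound : eLpNorm G q μ ≤ 4 * ∑ ℓ ∈ Finset.range (L+1), Dv ℓ * (Ev ℓ + Ew ℓ) := by
    have h1 : eLpNorm G q μ ≤ ∑ ℓ ∈ Finset.range (L+1), eLpNorm (Glev ℓ) q μ := by
      rw [hGdef]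
      exact eLpNorm_fun_sum_le _ _ q hq1 fun ℓ _ => (memGlev ℓ).1
    refine h1.trans ?_
    refine le_trans (Finset.sum_le_sum fun ℓ _ => levBound ℓ) ?_
    have h4 : ENNReal.ofReal (1/2) * 4 = 2 := by
      rw [show (4:ℝ≥0∞) = ENNReal.ofReal (4:ℝ) by norm_num,
        ← ENNReal.ofReal_mul (by norm_num)]
      norm_num
    have hhalf : ∀ ℓ, ENNReal.ofReal (1/2) *
          ((Dv ℓ + Dv ℓ) * ((Ev ℓ + Ev ℓ) + (Ew ℓ + Ew ℓ))
            + (Dc ℓ + Dc ℓ) * ((Ec1 ℓ + Ec1 ℓ) + (Ec2 ℓ + Ec2 ℓ)))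
        = 2 * (Dv ℓ * (Ev ℓ + Ew ℓ)) + 2 * (Dc ℓ * (Ec1 ℓ + Ec2 ℓ)) := by
      intro ℓ
      have hexp : ((Dv ℓ + Dv ℓ) * ((Ev ℓ + Ev ℓ) + (Ew ℓ + Ew ℓ))
          + (Dc ℓ + Dc ℓ) * ((Ec1 ℓ + Ec1 ℓ) + (Ec2 ℓ + Ec2 ℓ)))
          = 4 * (Dv ℓ * (Ev ℓ + Ew ℓ)) + 4 * (Dc ℓ * (Ec1 ℓ + Ec2 ℓ)) := by ring
      calc ENNReal.ofReal (1/2) *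
            ((Dv ℓ + Dv ℓ) * ((Ev ℓ + Ev ℓ) + (Ew ℓ + Ew ℓ))
              + (Dc ℓ + Dc ℓ) * ((Ec1 ℓ + Ec1 ℓ) + (Ec2 ℓ + Ec2 ℓ)))
          = (ENNReal.ofReal (1/2) * 4) * (Dv ℓ * (Ev ℓ + Ew ℓ))
              + (ENNReal.ofReal (1/2) * 4) * (Dc ℓ * (Ec1 ℓ + Ec2 ℓ)) := by
            rw [hexp]; ring
        _ = 2 * (Dv ℓ * (Ev ℓ + Ew ℓ)) + 2 * (Dc ℓ * (Ec1 ℓ + Ec2 ℓ)) := by rw [h4]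
    rw [Finset.sum_congr rfl fun ℓ _ => hhalf ℓ, Finset.sum_add_distrib]
    have hc0 : 2 * (Dc 0 * (Ec1 0 + Ec2 0)) = 0 := by
      have hD : Dc 0 = 0 := by
        have h0 : (fun ω => vC 0 0 ω - wC 0 0 ω) = fun _ => (0:H) := by
          funext ω; rw [hvC0 0 ω, hwC0 0 ω, sub_zero]
        rw [hDcdef]
        show eLpNorm (fun ω => vC 0 0 ω - wC 0 0 ω) r μ = 0
        rw [h0, show (fun _ : Ω => (0:H)) = (0 : Ω → H) from rfl]
        exact eLpNorm_zero
      rw [hD, zero_mul, mul_zero]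
    have hcs : ∀ ℓ', 2 * (Dc (ℓ'+1) * (Ec1 (ℓ'+1) + Ec2 (ℓ'+1)))
        = 2 * (Dv ℓ' * (Ev ℓ' + Ew ℓ')) := by
      intro ℓ'
      have hpos : 1 ≤ ℓ' + 1 := Nat.succ_le_succ (Nat.zero_le _)
      have hD : Dc (ℓ'+1) = Dv ℓ' := by
        rw [hDcdef, hDvdef]
        have h := ((hcoarse (ℓ'+1) hpos 0).comp
          (measurable_fst.sub measurable_snd)).eLpNorm_eq r
        simpa [Function.comp_def] using h
      have hE1 : Ec1 (ℓ'+1) = Ev ℓ' := by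
        rw [hEc1def, hEvdef]
        have h := ((hcoarse (ℓ'+1) hpos 0).comp measurable_fst).eLpNorm_eq r
        simpa [Function.comp_def] using h
      have hE2 : Ec2 (ℓ'+1) = Ew ℓ' := by
        rw [hEc2def, hEwdef]
        have h := ((hcoarse (ℓ'+1) hpos 0).comp measurable_snd).eLpNorm_eq r
        simpa [Function.comp_def] using h
      rw [hD, hE1, hE2]
    have hshift : ∑ ℓ ∈ Finset.range (L+1), 2 * (Dc ℓ * (Ec1 ℓ + Ec2 ℓ))
        = ∑ ℓ' ∈ Finset.range L, 2 * (Dv ℓ' * (Ev ℓ' + Ew ℓ')) := by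
      rw [Finset.sum_range_succ']
      rw [hc0, add_zero]
      exact Finset.sum_congr rfl fun ℓ' _ => hcs ℓ'
    rw [hshift]
    have hsub : ∑ ℓ' ∈ Finset.range L, 2 * (Dv ℓ' * (Ev ℓ' + Ew ℓ'))
        ≤ ∑ ℓ' ∈ Finset.range (L+1), 2 * (Dv ℓ' * (Ev ℓ' + Ew ℓ')) :=
      Finset.sum_le_sum_of_subset (Finset.range_subset_range.mpr (Nat.le_succ L))
    refine le_trans (add_le_add (le_refl _) hsub) (le_of_eq ?_)
    rw [← Finset.mul_sum]
    ring
  -- identify with the real-valued right-hand side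
  have hDvR : ∀ ℓ, Dv ℓ = ENNReal.ofReal
      (lpNorm μ (2*p) (fun ω => vF ℓ 0 ω - wF ℓ 0 ω)) := by
    intro ℓ
    have hmem : MemLp (fun ω => vF ℓ 0 ω - wF ℓ 0 ω) r μ := (hmomv ℓ).sub (hmomw ℓ)
    rw [hDvdef]
    show eLpNorm (fun ω => vF ℓ 0 ω - wF ℓ 0 ω) r μ = _
    rw [hmem.eLpNorm_eq_integral_rpow_norm hr0 hrt, hrtoR]
    simp only [_root_.lpNorm, one_div]
  have hEvR : ∀ ℓ, Ev ℓ = ENNReal.ofReal (lpNorm μ (2*p) (vF ℓ 0)) := by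
    intro ℓ
    rw [hEvdef]
    show eLpNorm (vF ℓ 0) r μ = _
    rw [(hmomv ℓ).eLpNorm_eq_integral_rpow_norm hr0 hrt, hrtoR]
    simp only [_root_.lpNorm, one_div]
  have hEwR : ∀ ℓ, Ew ℓ = ENNReal.ofReal (lpNorm μ (2*p) (wF ℓ 0)) := by
    intro ℓ
    rw [hEwdef]
    show eLpNorm (wF ℓ 0) r μ = _
    rw [(hmomw ℓ).eLpNorm_eq_integral_rpow_norm hr0 hrt, hrtoR]
    simp only [_root_.lpNorm, one_div]
  have hRHSnn : 0 ≤ 4 * ∑ ℓ ∈ Finset.range (L+1),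
      lpNorm μ (2*p) (fun ω => vF ℓ 0 ω - wF ℓ 0 ω)
        * (lpNorm μ (2*p) (vF ℓ 0) + lpNorm μ (2*p) (wF ℓ 0)) :=
    mul_nonneg (by norm_num) (Finset.sum_nonneg fun ℓ _ => mul_nonneg
      (lpNorm_nonneg _ _) (add_nonneg (lpNorm_nonneg _ _) (lpNorm_nonneg _ _)))
  have hENeq : (4:ℝ≥0∞) * ∑ ℓ ∈ Finset.range (L+1), Dv ℓ * (Ev ℓ + Ew ℓ)
      = ENNReal.ofReal (4 * ∑ ℓ ∈ Finset.range (L+1),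
          lpNorm μ (2*p) (fun ω => vF ℓ 0 ω - wF ℓ 0 ω)
            * (lpNorm μ (2*p) (vF ℓ 0) + lpNorm μ (2*p) (wF ℓ 0))) := by
    rw [ENNReal.ofReal_mul (by norm_num)]
    rw [ENNReal.ofReal_sum_of_nonneg (fun ℓ _ => mul_nonneg (lpNorm_nonneg _ _)
      (add_nonneg (lpNorm_nonneg _ _) (lpNorm_nonneg _ _)))]
    congr 1
    · norm_num
    refine Finset.sum_congr rfl fun ℓ _ => ?_
    rw [hDvR ℓ, hEvR ℓ, hEwR ℓ,
      ← ENNReal.ofReal_add (lpNorm_nonneg _ _) (lpNorm_nonneg _ _),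
      ← ENNReal.ofReal_mul (lpNorm_nonneg _ _)]
  -- final glue
  have hint : Integrable (fun ω => G ω ^ p) μ := by
    have h := memG.integrable_norm_rpow hq0 hqt
    have heq : (fun ω => ‖G ω‖ ^ q.toReal) = fun ω => G ω ^ p := by
      funext ω; rw [hqtoR, Real.norm_of_nonneg (hGnn ω)]
    rwa [heq] at h
  have hmono : (∫ ω, hsNorm e (CML ω - CbarML ω) ^ p ∂μ) ≤ ∫ ω, G ω ^ p ∂μ := by
    refine integral_mono_of_nonneg
      (Filter.Eventually.of_forall fun ω => Real.rpow_nonneg (hsNorm_nonneg e _) p)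
      hint
      (Filter.Eventually.of_forall fun ω =>
        Real.rpow_le_rpow (hsNorm_nonneg e _) (hFle ω) hp0.le)
  have hstep : (∫ ω, hsNorm e (CML ω - CbarML ω) ^ p ∂μ) ^ (1/p)
      ≤ (∫ ω, G ω ^ p ∂μ) ^ (1/p) :=
    Real.rpow_le_rpow
      (integral_nonneg fun ω => Real.rpow_nonneg (hsNorm_nonneg e _) p)
      hmono (by positivity)
  have heqG : (∫ ω, G ω ^ p ∂μ) ^ (1/p) = (eLpNorm G q μ).toReal := by
    rw [memG.eLpNorm_eq_integral_rpow_norm hq0 hqt, hqtoR]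
    rw [ENNReal.toReal_ofReal (Real.rpow_nonneg
      (integral_nonneg fun ω => Real.rpow_nonneg (norm_nonneg _) p) _)]
    rw [one_div]
    congr 1
    refine integral_congr_ae (Filter.Eventually.of_forall fun ω => ?_)
    simp only [Real.norm_of_nonneg (hGnn ω)]
  have hfin : eLpNorm G q μ ≤ ENNReal.ofReal (4 * ∑ ℓ ∈ Finset.range (L+1),
      lpNorm μ (2*p) (fun ω => vF ℓ 0 ω - wF ℓ 0 ω)
        * (lpNorm μ (2*p) (vF ℓ 0) + lpNorm μ (2*p) (wF ℓ 0))) :=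
    hGbound.trans (le_of_eq hENeq)
  have hfinal : (eLpNorm G q μ).toReal ≤ 4 * ∑ ℓ ∈ Finset.range (L+1),
      lpNorm μ (2*p) (fun ω => vF ℓ 0 ω - wF ℓ 0 ω)
        * (lpNorm μ (2*p) (vF ℓ 0) + lpNorm μ (2*p) (wF ℓ 0)) := by
    refine le_trans (ENNReal.toReal_mono ENNReal.ofReal_ne_top hfin) ?_
    rw [ENNReal.toReal_ofReal hRHSnn]
  exact le_trans (le_trans hstep (le_of_eq heqG)) hfinal
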